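/- Let I and J be ideals of R and define W(I,J) = { 𝔭 ∈ Spec(R) : Iⁿ ⊆ 𝔭 + J for some n > 0 }. Then W(I,J) is the largest specialization-closed subset W of Spec(R) satisfying W ∩ V(J) = V(I+J). -/

import Mathlib

universe u

/-- `W(I, J) = { 𝔭 ∈ Spec R | Iⁿ ⊆ 𝔭 + J for some n > 0 }`. -/
def WIJ {R : Type u} [CommRing R] (I J : Ideal R) : Set (PrimeSpectrum R) :=
  {p | ∃ n : ℕ, 0 < n ∧ I ^ n ≤ p.asIdeal + J}

/-- For ideals `I, J` of a commutative noetherian ring `R`, the set `W(I,J)` is the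
largest specialization-closed subset `W` of `Spec R` with `W ∩ V(J) = V(I+J)`. -/
theorem stmt18 {R : Type u} [CommRing R] [IsNoetherianRing R] (I J : Ideal R) :
    (∀ p q : PrimeSpectrum R, p ∈ WIJ I J → p.asIdeal ≤ q.asIdeal → q ∈ WIJ I J) ∧
    WIJ I J ∩ PrimeSpectrum.zeroLocus (J : Set R)
      = PrimeSpectrum.zeroLocus ((I + J : Ideal R) : Set R) ∧
    ∀ W : Set (PrimeSpectrum R),
      (∀ p q : PrimeSpectrum R, p ∈ W → p.asIdeal ≤ q.asIdeal → q ∈ W) →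
      W ∩ PrimeSpectrum.zeroLocus (J : Set R)
        = PrimeSpectrum.zeroLocus ((I + J : Ideal R) : Set R) →
      W ⊆ WIJ I J := by
  refine ⟨?_, ?_, ?_⟩
  · rintro p q ⟨n, hn, hle⟩ hpq
    exact ⟨n, hn, hle.trans (add_le_add_left hpq J)⟩
  · ext p
    simp only [Set.mem_inter_iff, PrimeSpectrum.mem_zeroLocus, ← Ideal.span_le,
      Ideal.span_eq]
    constructor
    · rintro ⟨⟨n, hn, hle⟩, hJ⟩
      have hp : p.asIdeal + J ≤ p.asIdeal := sup_le le_rfl hJ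
      have hI : I ≤ p.asIdeal :=
        p.2.pow_le_iff hn.ne' |>.mp (hle.trans hp)
      exact sup_le hI hJ
    · intro h
      exact ⟨⟨1, one_pos, by simpa using (le_sup_left.trans h).trans le_sup_left⟩,
        le_sup_right.trans h⟩
  · intro W hspec hWJ p hp
    have hrad : I ≤ (p.asIdeal + J).radical := by
      rw [Ideal.radical_eq_sInf]
      refine le_sInf ?_
      rintro q ⟨hq1, hq2⟩
      have hq : (⟨q, hq2⟩ : PrimeSpectrum R) ∈ W :=
        hspec p ⟨q, hq2⟩ hp (le_sup_left.trans hq1)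
      have : (⟨q, hq2⟩ : PrimeSpectrum R) ∈
          PrimeSpectrum.zeroLocus ((I + J : Ideal R) : Set R) := by
        rw [← hWJ]
        refine ⟨hq, ?_⟩
        rw [PrimeSpectrum.mem_zeroLocus, ← Ideal.span_le, Ideal.span_eq]
        exact le_sup_right.trans hq1
      rw [PrimeSpectrum.mem_zeroLocus, ← Ideal.span_le, Ideal.span_eq] at this
      exact le_sup_left.trans this
    obtain ⟨n, hn⟩ := Ideal.exists_pow_le_of_le_radical_of_fg hrad
      (IsNoetherian.noetherian I)
    exact ⟨n + 1, Nat.succ_pos n,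
      (Ideal.pow_le_pow_right (Nat.le_succ n)).trans hn⟩
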